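/- If M ≺ H_θ is an ℵ₀-guessing model, then M ∩ κ_M is a regular cardinal in H_θ. -/

import Mathlib

open Cardinal

namespace GuessingModels

/-- First-order formulas in the language of set theory (membership and equality),
with `n` free variables. -/
inductive SF : ℕ → Type
  | mem {n} (i j : Fin n) : SF n
  | eq {n} (i j : Fin n) : SF n
  | imp {n} (f g : SF n) : SF n
  | not {n} (f : SF n) : SF n
  | ex {n} (f : SF (n + 1)) : SF n

/-- Tarskian satisfaction of a set-theoretic formula in the structure `⟨S, ∈⟩`,
where `S` is a class of ZF sets. -/
def Realize (S : Set ZFSet) : ∀ {n}, SF n → (Fin n → ZFSet) → Prop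
  | _, .mem i j, v => v i ∈ v j
  | _, .eq i j, v => v i = v j
  | _, .imp f g, v => Realize S f v → Realize S g v
  | _, .not f, v => ¬ Realize S f v
  | _, .ex f, v => ∃ x ∈ S, Realize S f (Fin.cons x v)

/-- `M ≺ R` : `M` is an elementary substructure of `⟨R, ∈⟩`. -/
def Prec (M R : Set ZFSet) : Prop :=
  M ⊆ R ∧ ∀ {n : ℕ} (φ : SF n) (v : Fin n → ZFSet), (∀ i, v i ∈ M) →
    (Realize M φ v ↔ Realize R φ v)

/-- A (von Neumann) ordinal: a transitive set of transitive sets. -/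
def IsOrd (x : ZFSet) : Prop :=
  x.IsTransitive ∧ ∀ y ∈ x, ZFSet.IsTransitive y

/-- `≤` on ordinals, i.e. `∈` or `=`. -/
def ole (a b : ZFSet) : Prop := a ∈ b ∨ a = b

/-- The cardinality of (the extension of) a ZF set. -/
noncomputable def card (x : ZFSet) : Cardinal := Cardinal.mk x.toSet

/-- A ZF set which is a cardinal: an ordinal not equinumerous with any of its members. -/
def IsCard (κ : ZFSet) : Prop := IsOrd κ ∧ ∀ β ∈ κ, card β < card κ

/-- `s` (an external class) is a cofinal subset of the ordinal `κ`. -/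
def CofinalSetIn (s : Set ZFSet) (κ : ZFSet) : Prop :=
  (∀ x ∈ s, x ∈ κ) ∧ ∀ β ∈ κ, ∃ γ ∈ s, ole β γ

/-- A regular cardinal: an infinite cardinal all of whose cofinal subsets have full size. -/
def IsRegCard (κ : ZFSet) : Prop :=
  IsCard κ ∧ ZFSet.omega ⊆ κ ∧
    ∀ s : Set ZFSet, CofinalSetIn s κ → Cardinal.mk s = card κ

/-- A strong limit ZF cardinal. -/
def IsStrongLimit (κ : ZFSet) : Prop := ∀ β ∈ κ, (2 : Cardinal) ^ card β < card κ

/-- A strongly inaccessible cardinal: regular, uncountable and strong limit. -/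
def IsInacc (κ : ZFSet) : Prop := IsRegCard κ ∧ ZFSet.omega ∈ κ ∧ IsStrongLimit κ

/-- The transitive closure of a ZF set, as a class. -/
def tcl (x : ZFSet) : Set ZFSet := {y | Relation.TransGen (· ∈ ·) y x}

/-- `H_θ` : the class of sets hereditarily of size `< θ`. -/
noncomputable def HSet (θ : ZFSet) : Set ZFSet := {x | Cardinal.mk (tcl x) < card θ}

/-- `V_α` as a class, for `α` an ordinal (as a ZF set): sets of rank `< α`. -/
noncomputable def VSet (α : ZFSet) : Set ZFSet := {x | x.rank < α.rank}

/-- A suitable initial segment: `H_θ` for a regular cardinal `θ`, or a rank initial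
segment `V_α`. -/
def Suitable (R : Set ZFSet) : Prop :=
  (∃ θ : ZFSet, IsRegCard θ ∧ R = HSet θ) ∨ (∃ α : ZFSet, IsOrd α ∧ R = VSet α)

/-- `κ = κ_M` : `κ` is the least ordinal in `M` with `M ∩ κ ≠ κ`. -/
def KappaSpec (M : Set ZFSet) (κ : ZFSet) : Prop :=
  IsOrd κ ∧ κ ∈ M ∧ (∃ β ∈ κ, β ∉ M) ∧
    ∀ α : ZFSet, IsOrd α → α ∈ M → (∃ β ∈ α, β ∉ M) → ole κ α

/-- `d` is `(δ, M)`-approximated: `d ∩ Z ∈ M` for every `Z ∈ M` of size `< δ`. -/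
noncomputable def Approx (M : Set ZFSet) (δ : Cardinal.{1}) (d : ZFSet) : Prop :=
  ∀ Z : ZFSet, Z ∈ M → card Z < δ → (d ∩ Z) ∈ M

/-- `d ⊆ X` is `M`-guessed: `d ∩ M = e ∩ M` for some `e ∈ M ∩ P(X)`. -/
def Guessed (M : Set ZFSet) (X d : ZFSet) : Prop :=
  ∃ e : ZFSet, e ∈ M ∧ e ⊆ X ∧ ∀ z ∈ M, (z ∈ e ↔ z ∈ d)

/-- `M` is a `δ`-guessing model: every `(δ,M)`-approximated subset of any `X ∈ M`
is `M`-guessed. -/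
noncomputable def GuessingModel (M : Set ZFSet) (δ : Cardinal.{1}) : Prop :=
  ∀ X ∈ M, ∀ d : ZFSet, d ⊆ X → Approx M δ d → Guessed M X d

/-- `M` is `ℵ₁`-internally unbounded: every countable subset of `M` is contained
in a countable element of `M`. -/
noncomputable def IntUnb (M : Set ZFSet) : Prop :=
  ∀ A : Set ZFSet, A ⊆ M → A.Countable → ∃ z ∈ M, card z ≤ ℵ₀ ∧ A ⊆ z.toSet


-- ===================== Auxiliary development =====================
open ZFSet

noncomputable def img (f : ZFSet → ZFSet) (x : ZFSet) : ZFSet :=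
  @ZFSet.image f (Classical.allZFSetDefinable _) x

theorem mem_img {f : ZFSet → ZFSet} {x y : ZFSet} :
    y ∈ img f x ↔ ∃ z ∈ x, f z = y :=
  @ZFSet.mem_image f (Classical.allZFSetDefinable _) x y

/-! ### Formula helpers -/

abbrev i1 {n} : Fin (n+2) := Fin.succ 0
abbrev i2 {n} : Fin (n+3) := Fin.succ i1
abbrev i3 {n} : Fin (n+4) := Fin.succ i2
abbrev i4 {n} : Fin (n+5) := Fin.succ i3
abbrev i5 {n} : Fin (n+6) := Fin.succ i4
abbrev i6 {n} : Fin (n+7) := Fin.succ i5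

def vz : Fin 0 → ZFSet := fun i => i.elim0

def SF.and {n} (f g : SF n) : SF n := .not (.imp f (.not g))
def SF.or {n} (f g : SF n) : SF n := .imp (.not f) g
def SF.iff {n} (f g : SF n) : SF n := (f.imp g).and (g.imp f)
def SF.all {n} (f : SF (n+1)) : SF n := .not (.ex (.not f))

@[simp] theorem realize_mem {S n} (i j : Fin n) (v) : Realize S (.mem i j) v ↔ v i ∈ v j := .rfl
@[simp] theorem realize_eq {S n} (i j : Fin n) (v) : Realize S (.eq i j) v ↔ v i = v j := .rfl
@[simp] theorem realize_imp {S n} (f g : SF n) (v) :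
    Realize S (.imp f g) v ↔ (Realize S f v → Realize S g v) := .rfl
@[simp] theorem realize_not {S n} (f : SF n) (v) :
    Realize S (.not f) v ↔ ¬ Realize S f v := .rfl
@[simp] theorem realize_ex {S n} (f : SF (n+1)) (v) :
    Realize S (.ex f) v ↔ ∃ x ∈ S, Realize S f (Fin.cons x v) := .rfl
@[simp] theorem realize_and {S n} (f g : SF n) (v) :
    Realize S (f.and g) v ↔ (Realize S f v ∧ Realize S g v) := by
  simp only [SF.and, realize_not, realize_imp]; tauto
@[simp] theorem realize_or {S n} (f g : SF n) (v) :
    Realize S (f.or g) v ↔ (Realize S f v ∨ Realize S g v) := by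
  simp only [SF.or, realize_not, realize_imp]; tauto
@[simp] theorem realize_iff {S n} (f g : SF n) (v) :
    Realize S (f.iff g) v ↔ (Realize S f v ↔ Realize S g v) := by
  simp only [SF.iff, realize_and, realize_imp]; tauto
@[simp] theorem realize_all {S n} (f : SF (n+1)) (v) :
    Realize S (f.all) v ↔ ∀ x ∈ S, Realize S f (Fin.cons x v) := by
  simp only [SF.all, realize_not, realize_ex]; push_neg; rfl

/-! ### Ordinal basics -/

theorem IsOrd.mem {x y : ZFSet} (h : IsOrd x) (hy : y ∈ x) : IsOrd y :=
  ⟨h.2 y hy, fun z hz => h.2 z (h.1 y hy hz)⟩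

theorem IsOrd.tri : ∀ a : ZFSet, ∀ b : ZFSet, IsOrd a → IsOrd b → a ∈ b ∨ a = b ∨ b ∈ a := by
  intro a
  induction a using ZFSet.mem_wf.induction with
  | _ a IHa =>
  intro b
  induction b using ZFSet.mem_wf.induction with
  | _ b IHb =>
  intro ha hb
  by_contra hcon
  push_neg at hcon
  obtain ⟨h1, h2, h3⟩ := hcon
  have hab : a ⊆ b := by
    intro x hx
    rcases IHa x hx b (ha.mem hx) hb with h | h | h
    · exact h
    · exact absurd (h ▸ hx) h3
    · exact absurd (ha.1 x hx h) h3
  have hba : b ⊆ a := by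
    intro x hx
    rcases IHb x hx ha (hb.mem hx) with h | h | h
    · exact absurd (hb.1 x hx h) h1
    · exact absurd (h ▸ hx) h1
    · exact h
  exact h2 (ZFSet.ext fun z => ⟨fun h => hab h, fun h => hba h⟩)

theorem IsOrd.ole_of_subset {a b : ZFSet} (ha : IsOrd a) (hb : IsOrd b) (h : a ⊆ b) :
    ole a b := by
  rcases IsOrd.tri a b ha hb with h1 | h1 | h1
  · exact Or.inl h1
  · exact Or.inr h1
  · exact (ZFSet.mem_irrefl b (h h1)).elim

theorem mem_of_ole_mem {a b c : ZFSet} (hc : IsOrd c) (h1 : ole a b) (h2 : b ∈ c) : a ∈ c := by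
  rcases h1 with h | rfl
  · exact hc.1 b h2 h
  · exact h2

@[simp] theorem _root_.ZFSet.mem_toSet (a u : ZFSet) : a ∈ u.toSet ↔ a ∈ u := Iff.rfl

/-! ### Transitive closure -/

theorem mem_tcl {y x : ZFSet} : y ∈ tcl x ↔ y ∈ x ∨ ∃ b ∈ x, y ∈ tcl b := by
  constructor
  · intro h
    rcases (Relation.transGen_iff _ _ _).1 h with h | ⟨b, hb, hbx⟩
    · exact Or.inl h
    · exact Or.inr ⟨b, hbx, hb⟩
  · rintro (h | ⟨b, hb, hyb⟩)
    · exact Relation.TransGen.single h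
    · exact Relation.TransGen.tail hyb hb

theorem subset_tcl {x : ZFSet} : x.toSet ⊆ tcl x := fun _ h => Relation.TransGen.single h

theorem tcl_subset_of_mem {b x : ZFSet} (h : b ∈ x) : tcl b ⊆ tcl x :=
  fun _ hz => Relation.TransGen.tail hz h

theorem tcl_eq {x : ZFSet} : tcl x = x.toSet ∪ ⋃ b ∈ x.toSet, tcl b := by
  ext y
  simp only [Set.mem_union, Set.mem_iUnion, mem_toSet, exists_prop]
  exact mem_tcl

theorem tcl_subset_of_transitive {x : ZFSet} (h : x.IsTransitive) : tcl x ⊆ x.toSet := by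
  intro y hy
  induction hy using Relation.TransGen.head_induction_on with
  | single h' => exact h'
  | head h' _ ih => exact h _ ih h'

/-! ### HSet basics -/

theorem tcl_mono {x w : ZFSet} (h : x ⊆ w) : tcl x ⊆ tcl w := by
  intro z hz
  rcases mem_tcl.1 hz with h' | ⟨b, hb, hzb⟩
  · exact subset_tcl (by simpa using h h')
  · exact tcl_subset_of_mem (h hb) hzb

theorem mem_hset {x θ : ZFSet} : x ∈ HSet θ ↔ Cardinal.mk (tcl x) < card θ := Iff.rfl

theorem hset_trans {θ x y : ZFSet} (hx : x ∈ HSet θ) (hyx : y ∈ x) : y ∈ HSet θ :=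
  lt_of_le_of_lt (Cardinal.mk_le_mk_of_subset (tcl_subset_of_mem hyx)) hx

theorem hset_of_subset {θ x w : ZFSet} (h : x ⊆ w) (hw : w ∈ HSet θ) : x ∈ HSet θ :=
  lt_of_le_of_lt (Cardinal.mk_le_mk_of_subset (tcl_mono h)) hw

section HTheta

variable {θ : ZFSet} (hθc : ℵ₀ ≤ card θ)
include hθc

theorem empty_hset : (∅ : ZFSet) ∈ HSet θ := by
  have : tcl (∅ : ZFSet) = ∅ := by
    ext z
    simp only [Set.mem_empty_iff_false, iff_false]
    intro hz
    rcases mem_tcl.1 hz with h | ⟨b, hb, _⟩ <;> exact ZFSet.notMem_empty _ (by assumption)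
  rw [mem_hset, this]
  simpa using lt_of_lt_of_le Cardinal.aleph0_pos hθc

theorem insert_hset {a w : ZFSet} (ha : a ∈ HSet θ) (hw : w ∈ HSet θ) :
    insert a w ∈ HSet θ := by
  have hsub : tcl (insert a w) ⊆ insert a (tcl a ∪ tcl w) := by
    intro z hz
    rcases mem_tcl.1 hz with h | ⟨b, hb, hzb⟩
    · rcases ZFSet.mem_insert_iff.1 h with rfl | h'
      · exact Set.mem_insert _ _
      · exact Set.mem_insert_of_mem _ (Or.inr (subset_tcl (by simpa using h')))
    · rcases ZFSet.mem_insert_iff.1 hb with rfl | hb'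
      · exact Set.mem_insert_of_mem _ (Or.inl hzb)
      · exact Set.mem_insert_of_mem _ (Or.inr (tcl_subset_of_mem hb' hzb))
  refine lt_of_le_of_lt (Cardinal.mk_le_mk_of_subset hsub) ?_
  refine lt_of_le_of_lt (Cardinal.mk_insert_le ..) ?_
  refine Cardinal.add_lt_of_lt hθc (lt_of_le_of_lt (Cardinal.mk_union_le ..) ?_)
    (lt_of_lt_of_le Cardinal.one_lt_aleph0 hθc)
  exact Cardinal.add_lt_of_lt hθc ha hw

theorem sing_hset {a : ZFSet} (ha : a ∈ HSet θ) : ({a} : ZFSet) ∈ HSet θ :=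
  insert_hset hθc ha (empty_hset hθc)

theorem doub_hset {a b : ZFSet} (ha : a ∈ HSet θ) (hb : b ∈ HSet θ) :
    ({a, b} : ZFSet) ∈ HSet θ :=
  insert_hset hθc ha (sing_hset hθc hb)

theorem kpair_hset {a b : ZFSet} (ha : a ∈ HSet θ) (hb : b ∈ HSet θ) :
    ZFSet.pair a b ∈ HSet θ :=
  doub_hset hθc (sing_hset hθc ha) (doub_hset hθc ha hb)

omit hθc in
theorem mk_setProd (s t : Set ZFSet) : Cardinal.mk ↥(s ×ˢ t) = Cardinal.mk s * Cardinal.mk t := by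
  rw [Cardinal.mk_congr (Equiv.Set.prod s t), Cardinal.mk_prod, Cardinal.lift_id, Cardinal.lift_id]

theorem union_small {a b : Cardinal.{1}} (ha : a < card θ) (hb : b < card θ) :
    a + b < card θ := Cardinal.add_lt_of_lt hθc ha hb

theorem prod_hset {a b : ZFSet} (ha : a ∈ HSet θ) (hb : b ∈ HSet θ) :
    ZFSet.prod a b ∈ HSet θ := by
  classical
  have hUnion : ∀ {s t : Set ZFSet}, Cardinal.mk s < card θ → Cardinal.mk t < card θ →
      Cardinal.mk ↥(s ∪ t) < card θ := fun hs ht =>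
    lt_of_le_of_lt (Cardinal.mk_union_le ..) (Cardinal.add_lt_of_lt hθc hs ht)
  have hma : Cardinal.mk a.toSet < card θ :=
    lt_of_le_of_lt (Cardinal.mk_le_mk_of_subset subset_tcl) ha
  have hmb : Cardinal.mk b.toSet < card θ :=
    lt_of_le_of_lt (Cardinal.mk_le_mk_of_subset subset_tcl) hb
  have hprod : Cardinal.mk ↥(a.toSet ×ˢ b.toSet) < card θ := by
    rw [mk_setProd]; exact Cardinal.mul_lt_of_lt hθc hma hmb
  set A : Set ZFSet := (fun q : ZFSet × ZFSet => ZFSet.pair q.1 q.2) '' (a.toSet ×ˢ b.toSet)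
    with hA
  set B : Set ZFSet := (fun x : ZFSet => ({x} : ZFSet)) '' a.toSet with hB
  set C : Set ZFSet := (fun q : ZFSet × ZFSet => ({q.1, q.2} : ZFSet)) '' (a.toSet ×ˢ b.toSet)
    with hC
  have hsub : tcl (ZFSet.prod a b) ⊆ A ∪ B ∪ C ∪ tcl a ∪ tcl b := by
    intro z hz
    have hzcases : z ∈ ZFSet.prod a b ∨ ∃ p ∈ ZFSet.prod a b, z ∈ tcl p := by
      rcases mem_tcl.1 hz with h | ⟨p, hp, hzp⟩
      · exact Or.inl h
      · exact Or.inr ⟨p, hp, hzp⟩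
    rcases hzcases with h | ⟨p, hp, hzp⟩
    · rcases ZFSet.mem_prod.1 h with ⟨x, hx, y, hy, rfl⟩
      exact Or.inl (Or.inl (Or.inl (Or.inl ⟨⟨x, y⟩, ⟨by simpa using hx, by simpa using hy⟩, rfl⟩)))
    rcases ZFSet.mem_prod.1 hp with ⟨x, hx, y, hy, rfl⟩
    have hxa : x ∈ a.toSet := by simpa using hx
    have hyb : y ∈ b.toSet := by simpa using hy
    have hxtcl : tcl x ⊆ tcl a := tcl_subset_of_mem hx
    have hytcl : tcl y ⊆ tcl b := tcl_subset_of_mem hy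
    have key : z ∈ tcl x ∨ z ∈ tcl y ∨ z = x ∨ z = y ∨ z = ({x} : ZFSet) ∨
        z = ({x, y} : ZFSet) := by
      rcases mem_tcl.1 hzp with h' | ⟨w, hw, hzw⟩
      · rcases ZFSet.mem_pair.1 h' with rfl | rfl
        · exact Or.inr (Or.inr (Or.inr (Or.inr (Or.inl rfl))))
        · exact Or.inr (Or.inr (Or.inr (Or.inr (Or.inr rfl))))
      · rcases ZFSet.mem_pair.1 hw with rfl | rfl
        · rcases mem_tcl.1 hzw with h'' | ⟨c, hc, hzc⟩
          · exact Or.inr (Or.inr (Or.inl (ZFSet.mem_singleton.1 h'')))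
          · have hcx : c = x := ZFSet.mem_singleton.1 hc
            subst hcx
            exact Or.inl hzc
        · rcases mem_tcl.1 hzw with h'' | ⟨c, hc, hzc⟩
          · rcases ZFSet.mem_pair.1 h'' with rfl | rfl
            · exact Or.inr (Or.inr (Or.inl rfl))
            · exact Or.inr (Or.inr (Or.inr (Or.inl rfl)))
          · rcases ZFSet.mem_pair.1 hc with rfl | rfl
            · exact Or.inl hzc
            · exact Or.inr (Or.inl hzc)
    rcases key with h1 | h1 | rfl | rfl | rfl | rfl
    · exact Or.inl (Or.inr (hxtcl h1))
    · exact Or.inr (hytcl h1)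
    · exact Or.inl (Or.inr (subset_tcl hxa))
    · exact Or.inr (subset_tcl hyb)
    · exact Or.inl (Or.inl (Or.inl (Or.inr ⟨x, hxa, rfl⟩)))
    · exact Or.inl (Or.inl (Or.inr ⟨⟨x, y⟩, ⟨hxa, hyb⟩, rfl⟩))
  refine lt_of_le_of_lt (Cardinal.mk_le_mk_of_subset hsub) ?_
  have h1 : Cardinal.mk A < card θ := lt_of_le_of_lt Cardinal.mk_image_le hprod
  have h2 : Cardinal.mk B < card θ := lt_of_le_of_lt Cardinal.mk_image_le hma
  have h3 : Cardinal.mk C < card θ := lt_of_le_of_lt Cardinal.mk_image_le hprod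
  exact hUnion (hUnion (hUnion (hUnion h1 h2) h3) ha) hb

end HTheta

/-! ### Natural numbers -/

def nat2zf : ℕ → ZFSet
  | 0 => ∅
  | n + 1 => insert (nat2zf n) (nat2zf n)

theorem nat2zf_mem_omega (n : ℕ) : nat2zf n ∈ ZFSet.omega := by
  induction n with
  | zero => exact ZFSet.omega_zero
  | succ n ih => exact ZFSet.omega_succ ih

theorem mem_nat2zf {x : ZFSet} {n : ℕ} (h : x ∈ nat2zf n) : ∃ m, m < n ∧ x = nat2zf m := by
  induction n with
  | zero => exact absurd h (ZFSet.notMem_empty x)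
  | succ n ih =>
    rcases ZFSet.mem_insert_iff.1 h with rfl | h'
    · exact ⟨n, Nat.lt_succ_self n, rfl⟩
    · obtain ⟨m, hm, rfl⟩ := ih h'
      exact ⟨m, Nat.lt_succ_of_lt hm, rfl⟩

theorem nat2zf_mem_of_lt {m n : ℕ} (h : m < n) : nat2zf m ∈ nat2zf n := by
  induction n with
  | zero => omega
  | succ n ih =>
    rcases Nat.lt_succ_iff_lt_or_eq.1 h with h' | rfl
    · exact ZFSet.mem_insert_iff.2 (Or.inr (ih h'))
    · exact ZFSet.mem_insert _ _

theorem isOrd_nat2zf (n : ℕ) : IsOrd (nat2zf n) := by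
  constructor
  · intro y hy z hz
    obtain ⟨m, hm, rfl⟩ := mem_nat2zf hy
    obtain ⟨k, hk, rfl⟩ := mem_nat2zf hz
    exact nat2zf_mem_of_lt (hk.trans hm)
  · intro y hy z hz w hw
    obtain ⟨m, hm, rfl⟩ := mem_nat2zf hy
    obtain ⟨k, hk, rfl⟩ := mem_nat2zf hz
    obtain ⟨l, hl, rfl⟩ := mem_nat2zf hw
    exact nat2zf_mem_of_lt (hl.trans hk)

theorem mem_omega_iff {x : ZFSet} : x ∈ ZFSet.omega ↔ ∃ n, x = nat2zf n := by
  constructor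
  · intro h
    have : ∀ y : PSet, ZFSet.mk y ∈ ZFSet.omega → ∃ n, ZFSet.mk y = nat2zf n := by
      intro y hy
      obtain ⟨⟨n⟩, hn⟩ := ZFSet.mk_mem_iff.1 hy
      refine ⟨n, ?_⟩
      have hq : ZFSet.mk y = ZFSet.mk (PSet.ofNat n) := Quotient.sound hn
      rw [hq]
      clear hn hq hy
      induction n with
      | zero => rfl
      | succ n ih =>
        show ZFSet.mk (PSet.insert (PSet.ofNat n) (PSet.ofNat n)) = _
        have hins : ZFSet.mk (PSet.insert (PSet.ofNat n) (PSet.ofNat n)) =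
            insert (ZFSet.mk (PSet.ofNat n)) (ZFSet.mk (PSet.ofNat n)) := rfl
        rw [hins, ih]
        rfl
    exact Quotient.inductionOn x this h
  · rintro ⟨n, rfl⟩
    exact nat2zf_mem_omega n

theorem isOrd_omega : IsOrd ZFSet.omega := by
  constructor
  · intro y hy z hz
    obtain ⟨n, rfl⟩ := mem_omega_iff.1 hy
    obtain ⟨m, hm, rfl⟩ := mem_nat2zf hz
    exact nat2zf_mem_omega m
  · intro y hy
    obtain ⟨n, rfl⟩ := mem_omega_iff.1 hy
    exact (isOrd_nat2zf n).1

/-! ### Order types of sets of ordinals -/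

theorem image_congr {f g : ZFSet → ZFSet} {w : ZFSet} (h : ∀ x ∈ w, f x = g x) :
    img f w = img g w := by
  apply ZFSet.ext
  intro z
  rw [mem_img, mem_img]
  constructor
  · rintro ⟨x, hx, rfl⟩; exact ⟨x, hx, (h x hx).symm⟩
  · rintro ⟨x, hx, rfl⟩; exact ⟨x, hx, h x hx⟩

attribute [local instance] Classical.propDecidable

noncomputable def otpFun (e : ZFSet) : ZFSet → ZFSet :=
  ZFSet.mem_wf.fix fun γ IH =>
    img (fun x => if h : x ∈ γ then IH x h else ∅) (e ∩ γ)

theorem otpFun_eq (e γ : ZFSet) :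
    otpFun e γ = img (otpFun e) (e ∩ γ) := by
  show ZFSet.mem_wf.fix _ γ = _
  rw [WellFounded.fix_eq]
  apply image_congr
  intro x hx
  rw [dif_pos (ZFSet.mem_inter.1 hx).2]
  rfl

theorem mem_otpFun {e γ z : ZFSet} :
    z ∈ otpFun e γ ↔ ∃ x, x ∈ e ∧ x ∈ γ ∧ otpFun e x = z := by
  rw [otpFun_eq, mem_img]
  constructor
  · rintro ⟨x, hx, rfl⟩
    exact ⟨x, (ZFSet.mem_inter.1 hx).1, (ZFSet.mem_inter.1 hx).2, rfl⟩
  · rintro ⟨x, hx, hxγ, rfl⟩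
    exact ⟨x, ZFSet.mem_inter.2 ⟨hx, hxγ⟩, rfl⟩

section Otp

variable {e : ZFSet} (he : ∀ x ∈ e, IsOrd x)
include he

theorem otpFun_inj {x γ : ZFSet} (hx : x ∈ e) (hγ : γ ∈ e)
    (h : otpFun e x = otpFun e γ) : x = γ := by
  rcases IsOrd.tri x γ (he x hx) (he γ hγ) with h1 | h1 | h1
  · have : otpFun e x ∈ otpFun e γ := mem_otpFun.2 ⟨x, hx, h1, rfl⟩
    rw [h] at this
    exact absurd this (ZFSet.mem_irrefl _)
  · exact h1
  · have : otpFun e γ ∈ otpFun e x := mem_otpFun.2 ⟨γ, hγ, h1, rfl⟩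
    rw [h] at this
    exact absurd this (ZFSet.mem_irrefl _)

theorem otpFun_mem_iff {x γ : ZFSet} (hx : x ∈ e) (hγ : γ ∈ e) :
    otpFun e x ∈ otpFun e γ ↔ x ∈ γ := by
  constructor
  · intro h
    obtain ⟨x', hx', hx'γ, hval⟩ := mem_otpFun.1 h
    rwa [otpFun_inj he hx' hx hval] at hx'γ
  · intro h
    exact mem_otpFun.2 ⟨x, hx, h, rfl⟩

theorem isOrd_otpFun {γ : ZFSet} (hγ : γ ∈ e) : IsOrd (otpFun e γ) := by
  have htr : ∀ δ ∈ e, ZFSet.IsTransitive (otpFun e δ) := by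
    intro δ hδ z hz w hw
    obtain ⟨x, hx, hxδ, rfl⟩ := mem_otpFun.1 hz
    obtain ⟨x', hx', hx'x, rfl⟩ := mem_otpFun.1 hw
    exact mem_otpFun.2 ⟨x', hx', (he δ hδ).1 x hxδ hx'x, rfl⟩
  refine ⟨htr γ hγ, ?_⟩
  intro z hz
  obtain ⟨x, hx, _, rfl⟩ := mem_otpFun.1 hz
  exact htr x hx

noncomputable def otpSet (e : ZFSet) : ZFSet := img (otpFun e) e

omit he in
theorem mem_otpSet {z : ZFSet} : z ∈ otpSet e ↔ ∃ x ∈ e, otpFun e x = z := by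
  rw [otpSet, mem_img]

theorem isOrd_otpSet : IsOrd (otpSet e) := by
  constructor
  · intro z hz w hw
    rw [otpSet, mem_img] at hz
    obtain ⟨x, hx, rfl⟩ := hz
    obtain ⟨x', hx', _, rfl⟩ := mem_otpFun.1 hw
    exact mem_otpSet.2 ⟨x', hx', rfl⟩
  · intro z hz
    obtain ⟨x, hx, rfl⟩ := mem_otpSet.1 hz
    exact (isOrd_otpFun he hx).1

end Otp

/-! ### Elementarity -/

def PSing (S : Set ZFSet) (w a : ZFSet) : Prop := ∀ u ∈ S, (u ∈ w ↔ u = a)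
def PDoub (S : Set ZFSet) (w a b : ZFSet) : Prop := ∀ u ∈ S, (u ∈ w ↔ u = a ∨ u = b)
def PPair (S : Set ZFSet) (p x y : ZFSet) : Prop :=
  ∀ w ∈ S, (w ∈ p ↔ PSing S w x ∨ PDoub S w x y)
def PMem (S : Set ZFSet) (g x y : ZFSet) : Prop := ∃ p ∈ S, p ∈ g ∧ PPair S p x y

def singF {n} (w a : Fin n) : SF n := .all ((SF.mem 0 w.succ).iff (.eq 0 a.succ))
def doubF {n} (w a b : Fin n) : SF n :=
  .all ((SF.mem 0 w.succ).iff ((SF.eq 0 a.succ).or (.eq 0 b.succ)))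
def pairF {n} (p x y : Fin n) : SF n :=
  .all ((SF.mem 0 p.succ).iff ((singF 0 x.succ).or (doubF 0 x.succ y.succ)))
def pmemF {n} (g x y : Fin n) : SF n := .ex ((SF.mem 0 g.succ).and (pairF 0 x.succ y.succ))

@[simp] theorem realize_singF {S n} (w a : Fin n) (v) :
    Realize S (singF w a) v ↔ PSing S (v w) (v a) := by
  simp [singF, PSing, Fin.cons_succ, Fin.cons_zero]

@[simp] theorem realize_doubF {S n} (w a b : Fin n) (v) :
    Realize S (doubF w a b) v ↔ PDoub S (v w) (v a) (v b) := by
  simp [doubF, PDoub, Fin.cons_succ, Fin.cons_zero]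

@[simp] theorem realize_pairF {S n} (p x y : Fin n) (v) :
    Realize S (pairF p x y) v ↔ PPair S (v p) (v x) (v y) := by
  simp [pairF, PPair, Fin.cons_succ, Fin.cons_zero]

@[simp] theorem realize_pmemF {S n} (g x y : Fin n) (v) :
    Realize S (pmemF g x y) v ↔ PMem S (v g) (v x) (v y) := by
  simp [pmemF, PMem, Fin.cons_succ, Fin.cons_zero]

section Abs

variable {θ : ZFSet} (hθc : ℵ₀ ≤ card θ)
include hθc

omit hθc in
theorem abs_psing {w a : ZFSet} (hw : w ∈ HSet θ) (ha : a ∈ HSet θ) :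
    PSing (HSet θ) w a ↔ w = ({a} : ZFSet) := by
  constructor
  · intro h
    apply ZFSet.ext
    intro z
    rw [ZFSet.mem_singleton]
    constructor
    · intro hz; exact (h z (hset_trans hw hz)).1 hz
    · rintro rfl; exact (h _ ha).2 rfl
  · rintro rfl u _
    exact ZFSet.mem_singleton

omit hθc in
theorem abs_pdoub {w a b : ZFSet} (hw : w ∈ HSet θ) (ha : a ∈ HSet θ) (hb : b ∈ HSet θ) :
    PDoub (HSet θ) w a b ↔ w = ({a, b} : ZFSet) := by
  constructor
  · intro h
    apply ZFSet.ext
    intro z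
    rw [ZFSet.mem_pair]
    constructor
    · intro hz; exact (h z (hset_trans hw hz)).1 hz
    · rintro (rfl | rfl)
      · exact (h _ ha).2 (Or.inl rfl)
      · exact (h _ hb).2 (Or.inr rfl)
  · rintro rfl u _
    exact ZFSet.mem_pair

omit hθc in
theorem mem_kpair {w x y : ZFSet} :
    w ∈ ZFSet.pair x y ↔ w = ({x} : ZFSet) ∨ w = ({x, y} : ZFSet) := by
  simp [ZFSet.pair, ZFSet.mem_pair]

theorem abs_ppair {p x y : ZFSet} (hp : p ∈ HSet θ) (hx : x ∈ HSet θ) (hy : y ∈ HSet θ) :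
    PPair (HSet θ) p x y ↔ p = ZFSet.pair x y := by
  constructor
  · intro h
    apply ZFSet.ext
    intro z
    rw [mem_kpair]
    constructor
    · intro hz
      have hzH := hset_trans hp hz
      rcases (h z hzH).1 hz with h' | h'
      · exact Or.inl ((abs_psing hzH hx).1 h')
      · exact Or.inr ((abs_pdoub hzH hx hy).1 h')
    · rintro (rfl | rfl)
      · exact (h _ (sing_hset hθc hx)).2 (Or.inl ((abs_psing (sing_hset hθc hx) hx).2 rfl))
      · exact (h _ (doub_hset hθc hx hy)).2
          (Or.inr ((abs_pdoub (doub_hset hθc hx hy) hx hy).2 rfl))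
  · rintro rfl w hw
    rw [mem_kpair]
    constructor
    · rintro (rfl | rfl)
      · exact Or.inl ((abs_psing hw hx).2 rfl)
      · exact Or.inr ((abs_pdoub hw hx hy).2 rfl)
    · rintro (h' | h')
      · exact Or.inl ((abs_psing hw hx).1 h')
      · exact Or.inr ((abs_pdoub hw hx hy).1 h')

theorem abs_pmem {g x y : ZFSet} (hg : g ∈ HSet θ) (hx : x ∈ HSet θ) (hy : y ∈ HSet θ) :
    PMem (HSet θ) g x y ↔ ZFSet.pair x y ∈ g := by
  constructor
  · rintro ⟨p, hpH, hpg, hpair⟩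
    rwa [(abs_ppair hθc hpH hx hy).1 hpair] at hpg
  · intro h
    exact ⟨ZFSet.pair x y, kpair_hset hθc hx hy, h,
      (abs_ppair hθc (kpair_hset hθc hx hy) hx hy).2 rfl⟩

end Abs

theorem consM0 {M : Set ZFSet} : ∀ i, vz i ∈ M := fun i => i.elim0

theorem consM {M : Set ZFSet} {n : ℕ} {a : ZFSet} {v : Fin n → ZFSet} (ha : a ∈ M)
    (hv : ∀ i, v i ∈ M) : ∀ i, (Fin.cons a v : Fin (n+1) → ZFSet) i ∈ M :=
  fun i => Fin.cases ha hv i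

section ElemM

variable {θ : ZFSet} {M : Set ZFSet} (hθc : ℵ₀ ≤ card θ) (hM : Prec M (HSet θ))

include hM in
theorem defin {n} (φ : SF (n+1)) (v : Fin n → ZFSet) (hv : ∀ i, v i ∈ M)
    (hex : Realize (HSet θ) (.ex φ) v) : ∃ x ∈ M, Realize (HSet θ) φ (Fin.cons x v) := by
  obtain ⟨x, hxM, hx⟩ := (hM.2 (.ex φ) v hv).2 hex
  exact ⟨x, hxM, (hM.2 φ _ (consM hxM hv)).1 hx⟩

include hθc hM

theorem empty_mem_M : (∅ : ZFSet) ∈ M := by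
  have hex : Realize (HSet θ) (.ex (SF.all (.not (.mem 0 i1)))) vz := by
    simp only [realize_ex, realize_all, realize_not, realize_mem, Fin.cons_succ, Fin.cons_zero]
    exact ⟨∅, empty_hset hθc, fun u _ h => ZFSet.notMem_empty u h⟩
  obtain ⟨x, hxM, hx⟩ := defin hM (SF.all (.not (.mem 0 i1))) vz consM0 hex
  · have : x = ∅ := by
      apply ZFSet.ext
      intro z
      simp only [ZFSet.notMem_empty, iff_false]
      intro hz
      simp only [realize_all, realize_not, realize_mem, Fin.cons_succ, Fin.cons_zero] at hx
      exact hx z (hset_trans (hM.1 hxM) hz) hz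
    rwa [this] at hxM

theorem insert_mem_M {a w : ZFSet} (ha : a ∈ M) (hw : w ∈ M) : insert a w ∈ M := by
  have hex : Realize (HSet θ) (.ex (SF.all ((SF.mem 0 i1).iff ((SF.mem 0 i3).or (.eq 0 i2)))))
      (Fin.cons a (Fin.cons w vz)) := by
    simp only [realize_ex, realize_all, realize_iff, realize_or, realize_mem, realize_eq,
      Fin.cons_succ, Fin.cons_zero]
    refine ⟨insert a w, insert_hset hθc (hM.1 ha) (hM.1 hw), fun z _ => ?_⟩
    rw [ZFSet.mem_insert_iff]
    tauto
  obtain ⟨x, hxM, hx⟩ := defin hM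
    (SF.all ((SF.mem 0 i1).iff ((SF.mem 0 i3).or (.eq 0 i2))))
    (Fin.cons a (Fin.cons w vz)) (consM ha (consM hw consM0)) hex
  · simp only [realize_all, realize_iff, realize_or, realize_mem, realize_eq,
      Fin.cons_succ, Fin.cons_zero] at hx
    have : x = insert a w := by
      apply ZFSet.ext
      intro z
      rw [ZFSet.mem_insert_iff]
      constructor
      · intro hz
        rcases (hx z (hset_trans (hM.1 hxM) hz)).1 hz with h | h
        · exact Or.inr h
        · exact Or.inl h
      · rintro (rfl | h)
        · exact (hx z (hM.1 ha)).2 (Or.inr rfl)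
        · exact (hx z (hset_trans (hM.1 hw) h)).2 (Or.inl h)
    rwa [this] at hxM

theorem sing_mem_M {a : ZFSet} (ha : a ∈ M) : ({a} : ZFSet) ∈ M :=
  insert_mem_M hθc hM ha (empty_mem_M hθc hM)

theorem doub_mem_M {a b : ZFSet} (ha : a ∈ M) (hb : b ∈ M) : ({a, b} : ZFSet) ∈ M :=
  insert_mem_M hθc hM ha (sing_mem_M hθc hM hb)

theorem kpair_mem_M {a b : ZFSet} (ha : a ∈ M) (hb : b ∈ M) : ZFSet.pair a b ∈ M :=
  doub_mem_M hθc hM (sing_mem_M hθc hM ha) (doub_mem_M hθc hM ha hb)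

theorem fin_mem_M : ∀ (n : ℕ) (w : ZFSet), w.toSet.Finite → w.toSet.ncard = n →
    w.toSet ⊆ M → w ∈ M := by
  intro n
  induction n with
  | zero =>
    intro w hfin hcard _
    have : w.toSet = ∅ := (Set.ncard_eq_zero hfin).1 hcard
    have hw : w = ∅ := by
      apply ZFSet.ext
      intro z
      simp only [ZFSet.notMem_empty, iff_false]
      intro hz
      exact Set.eq_empty_iff_forall_notMem.1 this z hz
    rw [hw]
    exact empty_mem_M hθc hM
  | succ n ih =>
    intro w hfin hcard hsub
    have hne : w.toSet.Nonempty := by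
      rw [← Set.ncard_pos hfin, hcard]; omega
    obtain ⟨a, ha⟩ := hne
    set w' := ZFSet.sep (fun z => z ≠ a) w with hw'
    have hw'toSet : w'.toSet = w.toSet \ {a} := by
      ext z
      simp [hw', ZFSet.mem_sep, ZFSet.mem_toSet, and_comm]
    have h1 : w'.toSet.Finite := hw'toSet ▸ hfin.diff (t := {a})
    have h2 : w'.toSet.ncard = n := by
      rw [hw'toSet, Set.ncard_diff_singleton_of_mem ha, hcard]
      omega
    have h3 : w'.toSet ⊆ M := fun z hz => hsub (hw'toSet ▸ hz : z ∈ w.toSet \ {a}).1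
    have hw'M : w' ∈ M := ih w' h1 h2 h3
    have : w = insert a w' := by
      apply ZFSet.ext
      intro z
      rw [ZFSet.mem_insert_iff, hw', ZFSet.mem_sep]
      constructor
      · intro hz
        by_cases hza : z = a
        · exact Or.inl hza
        · exact Or.inr ⟨hz, hza⟩
      · rintro (rfl | ⟨hz, _⟩)
        · exact ha
        · exact hz
    rw [this]
    exact insert_mem_M hθc hM (hsub ha) hw'M

theorem approx_of_subset_M {d : ZFSet} (hd : d.toSet ⊆ M) : Approx M ℵ₀ d := by
  intro Z hZ hcard
  have hfin : (d ∩ Z).toSet.Finite := by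
    have : (d ∩ Z).toSet ⊆ Z.toSet := fun z hz =>
      (ZFSet.mem_toSet _ _).2 (ZFSet.mem_inter.1 ((ZFSet.mem_toSet _ _).1 hz)).2
    exact Set.Finite.subset (Cardinal.lt_aleph0_iff_set_finite.1 hcard) this
  have hsub : (d ∩ Z).toSet ⊆ M := fun z hz =>
    hd ((ZFSet.mem_toSet _ _).2 (ZFSet.mem_inter.1 ((ZFSet.mem_toSet _ _).1 hz)).1)
  exact fin_mem_M hθc hM _ _ hfin rfl hsub

theorem prod_mem_M {a b : ZFSet} (ha : a ∈ M) (hb : b ∈ M) : ZFSet.prod a b ∈ M := by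
  have hex : Realize (HSet θ)
      (.ex (SF.all ((SF.mem 0 i1).iff (.ex ((SF.mem 0 i3).and (.ex ((SF.mem 0 i5).and
        (pairF i2 i1 0))))))))
      (Fin.cons a (Fin.cons b vz)) := by
    simp only [realize_ex, realize_all, realize_iff, realize_and, realize_mem, realize_pairF,
      Fin.cons_succ, Fin.cons_zero]
    refine ⟨ZFSet.prod a b, prod_hset hθc (hM.1 ha) (hM.1 hb), fun z hzH => ?_⟩
    constructor
    · intro hz
      rcases ZFSet.mem_prod.1 hz with ⟨x, hx, y, hy, rfl⟩
      have hxH := hset_trans (hM.1 ha) hx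
      have hyH := hset_trans (hM.1 hb) hy
      exact ⟨x, hxH, hx, y, hyH, hy, (abs_ppair hθc hzH hxH hyH).2 rfl⟩
    · rintro ⟨x, hxH, hxa, y, hyH, hyb, hp⟩
      rw [(abs_ppair hθc hzH hxH hyH).1 hp]
      exact ZFSet.pair_mem_prod.2 ⟨hxa, hyb⟩
  obtain ⟨X, hXM, hX⟩ := defin hM
    (SF.all ((SF.mem 0 i1).iff (.ex ((SF.mem 0 i3).and (.ex ((SF.mem 0 i5).and
      (pairF i2 i1 0)))))))
    (Fin.cons a (Fin.cons b vz)) (consM ha (consM hb consM0)) hex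
  · simp only [realize_all, realize_iff, realize_and, realize_ex, realize_mem, realize_pairF,
      Fin.cons_succ, Fin.cons_zero] at hX
    have : X = ZFSet.prod a b := by
      apply ZFSet.ext
      intro z
      constructor
      · intro hz
        have hzH := hset_trans (hM.1 hXM) hz
        obtain ⟨x, hxH, hxa, y, hyH, hyb, hp⟩ := (hX z hzH).1 hz
        rw [(abs_ppair hθc hzH hxH hyH).1 hp]
        exact ZFSet.pair_mem_prod.2 ⟨hxa, hyb⟩
      · intro hz
        rcases ZFSet.mem_prod.1 hz with ⟨x, hx, y, hy, rfl⟩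
        have hxH := hset_trans (hM.1 ha) hx
        have hyH := hset_trans (hM.1 hb) hy
        exact (hX _ (kpair_hset hθc hxH hyH)).2
          ⟨x, hxH, hx, y, hyH, hy, (abs_ppair hθc (kpair_hset hθc hxH hyH) hxH hyH).2 rfl⟩
    rwa [this] at hXM

end ElemM

/-! ### Isomorphism formulas -/

theorem hset_of_transitive_small {θ x : ZFSet} (h : x.IsTransitive)
    (hmk : Cardinal.mk x.toSet < card θ) : x ∈ HSet θ :=
  lt_of_le_of_lt (Cardinal.mk_le_mk_of_subset (tcl_subset_of_transitive h)) hmk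

theorem kpair_mem_hset {θ x y : ZFSet} (h : ZFSet.pair x y ∈ HSet θ) :
    x ∈ HSet θ ∧ y ∈ HSet θ := by
  have h1 : ({x} : ZFSet) ∈ HSet θ := hset_trans h (mem_kpair.2 (Or.inl rfl))
  have h2 : ({x, y} : ZFSet) ∈ HSet θ := hset_trans h (mem_kpair.2 (Or.inr rfl))
  exact ⟨hset_trans h1 (ZFSet.mem_singleton.2 rfl), hset_trans h2 (ZFSet.mem_pair.2 (Or.inr rfl))⟩

def IsoProps (α g A : ZFSet) : Prop :=
  IsOrd α ∧
  (∀ p ∈ g, ∃ x ∈ α, ∃ y ∈ A, p = ZFSet.pair x y) ∧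
  (∀ x ∈ α, ∃ y ∈ A, ZFSet.pair x y ∈ g) ∧
  (∀ x y y', ZFSet.pair x y ∈ g → ZFSet.pair x y' ∈ g → y = y') ∧
  (∀ x x' y, ZFSet.pair x y ∈ g → ZFSet.pair x' y ∈ g → x = x') ∧
  (∀ y ∈ A, ∃ x, ZFSet.pair x y ∈ g) ∧
  (∀ x y x' y', ZFSet.pair x y ∈ g → ZFSet.pair x' y' ∈ g → x ∈ x' → y ∈ y')

def ordF {n} (t : Fin n) : SF n :=
  .all ((SF.mem 0 t.succ).imp (.all ((SF.mem 0 i1).imp (.mem 0 t.succ.succ))))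
def elemtransF {n} (t : Fin n) : SF n :=
  .all ((SF.mem 0 t.succ).imp (.all ((SF.mem 0 i1).imp
    (.all ((SF.mem 0 i1).imp (.mem 0 i2))))))
def pairsF : SF 3 :=
  .all ((SF.mem 0 i1).imp (.ex ((SF.mem 0 i3).and (.ex ((SF.mem 0 i5).and (pairF i2 i1 0))))))
def totalF : SF 3 :=
  .all ((SF.mem 0 i2).imp (.ex ((SF.mem 0 i4).and (pmemF i2 i1 0))))
def funcF : SF 3 :=
  .all (.all (.all ((pmemF i3 i2 i1).imp ((pmemF i3 i2 0).imp (.eq i1 0)))))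
def injF : SF 3 :=
  .all (.all (.all ((pmemF i3 i2 0).imp ((pmemF i3 i1 0).imp (.eq i2 i1)))))
def surjF : SF 3 :=
  .all ((SF.mem 0 i3).imp (.ex (pmemF i2 0 i1)))
def opF : SF 3 :=
  .all (.all (.all (.all ((pmemF i4 i3 i1).imp ((pmemF i4 i2 0).imp
    ((SF.mem i3 i2).imp (.mem i1 0)))))))
def isoF : SF 3 :=
  ((ordF i1).and (elemtransF i1)).and
    (pairsF.and (totalF.and (funcF.and (injF.and (surjF.and opF)))))

section IsoAbs

variable {θ : ZFSet} (hθc : ℵ₀ ≤ card θ)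
include hθc

theorem realize_isoF {α g A : ZFSet} (hg : g ∈ HSet θ) (hα : α ∈ HSet θ) (hA : A ∈ HSet θ) :
    Realize (HSet θ) isoF (Fin.cons g (Fin.cons α (Fin.cons A vz))) ↔ IsoProps α g A := by
  simp only [isoF, ordF, elemtransF, pairsF, totalF, funcF, injF, surjF, opF,
    realize_and, realize_all, realize_ex, realize_imp, realize_mem, realize_eq,
    realize_pairF, realize_pmemF, Fin.cons_succ, Fin.cons_zero]
  constructor
  · rintro ⟨⟨h1, h2⟩, h3, h4, h5, h6, h7, h8⟩
    refine ⟨⟨?_, ?_⟩, ?_, ?_, ?_, ?_, ?_, ?_⟩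
    · intro y hy z hz
      exact h1 y (hset_trans hα hy) hy z (hset_trans (hset_trans hα hy) hz) hz
    · intro y hy z hz w hw
      have hyH := hset_trans hα hy
      have hzH := hset_trans hyH hz
      exact h2 y hyH hy z hzH hz w (hset_trans hzH hw) hw
    · intro p hp
      have hpH := hset_trans hg hp
      obtain ⟨x, hxH, hxα, y, hyH, hyA, hpair⟩ := h3 p hpH hp
      exact ⟨x, hxα, y, hyA, (abs_ppair hθc hpH hxH hyH).1 hpair⟩
    · intro x hx
      obtain ⟨y, hyH, hyA, hpm⟩ := h4 x (hset_trans hα hx) hx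
      exact ⟨y, hyA, (abs_pmem hθc hg (hset_trans hα hx) hyH).1 hpm⟩
    · intro x y y' hxy hxy'
      have h := kpair_mem_hset (hset_trans hg hxy)
      have h' := kpair_mem_hset (hset_trans hg hxy')
      exact h5 x h.1 y h.2 y' h'.2 ((abs_pmem hθc hg h.1 h.2).2 hxy)
        ((abs_pmem hθc hg h.1 h'.2).2 hxy')
    · intro x x' y hxy hx'y
      have h := kpair_mem_hset (hset_trans hg hxy)
      have h' := kpair_mem_hset (hset_trans hg hx'y)
      exact h6 x h.1 x' h'.1 y h.2 ((abs_pmem hθc hg h.1 h.2).2 hxy)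
        ((abs_pmem hθc hg h'.1 h.2).2 hx'y)
    · intro y hy
      obtain ⟨x, hxH, hpm⟩ := h7 y (hset_trans hA hy) hy
      exact ⟨x, (abs_pmem hθc hg hxH (hset_trans hA hy)).1 hpm⟩
    · intro x y x' y' hxy hx'y' hxx'
      have h := kpair_mem_hset (hset_trans hg hxy)
      have h' := kpair_mem_hset (hset_trans hg hx'y')
      exact h8 x h.1 x' h'.1 y h.2 y' h'.2 ((abs_pmem hθc hg h.1 h.2).2 hxy)
        ((abs_pmem hθc hg h'.1 h'.2).2 hx'y') hxx'
  · rintro ⟨⟨h1, h2⟩, h3, h4, h5, h6, h7, h8⟩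
    refine ⟨⟨?_, ?_⟩, ?_, ?_, ?_, ?_, ?_, ?_⟩
    · intro y _ hy z _ hz
      exact h1 y hy hz
    · intro y _ hy z _ hz w _ hw
      exact h2 y hy z hz hw
    · intro p hpH hp
      obtain ⟨x, hxα, y, hyA, rfl⟩ := h3 p hp
      have hc := kpair_mem_hset hpH
      exact ⟨x, hc.1, hxα, y, hc.2, hyA, (abs_ppair hθc hpH hc.1 hc.2).2 rfl⟩
    · intro x hxH hx
      obtain ⟨y, hyA, hpm⟩ := h4 x hx
      have hyH := (kpair_mem_hset (hset_trans hg hpm)).2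
      exact ⟨y, hyH, hyA, (abs_pmem hθc hg hxH hyH).2 hpm⟩
    · intro x hxH y hyH y' hy'H hpm hpm'
      exact h5 x y y' ((abs_pmem hθc hg hxH hyH).1 hpm) ((abs_pmem hθc hg hxH hy'H).1 hpm')
    · intro x hxH x' hx'H y hyH hpm hpm'
      exact h6 x x' y ((abs_pmem hθc hg hxH hyH).1 hpm) ((abs_pmem hθc hg hx'H hyH).1 hpm')
    · intro y hyH hy
      obtain ⟨x, hpm⟩ := h7 y hy
      have hxH := (kpair_mem_hset (hset_trans hg hpm)).1
      exact ⟨x, hxH, (abs_pmem hθc hg hxH hyH).2 hpm⟩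
    · intro x hxH x' hx'H y hyH y' hy'H hpm hpm' hxx'
      exact h8 x y x' y' ((abs_pmem hθc hg hxH hyH).1 hpm)
        ((abs_pmem hθc hg hx'H hy'H).1 hpm') hxx'

end IsoAbs

/-! ### Existence of isomorphisms in M -/

theorem isoProps_otp {A : ZFSet} (hord : ∀ a ∈ A, IsOrd a) :
    IsoProps (otpSet A) (img (fun x => ZFSet.pair (otpFun A x) x) A) A := by
  set G := img (fun x => ZFSet.pair (otpFun A x) x) A with hG
  have memG : ∀ {p : ZFSet}, p ∈ G ↔ ∃ x ∈ A, ZFSet.pair (otpFun A x) x = p := fun {p} => mem_img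
  refine ⟨isOrd_otpSet hord, ?_, ?_, ?_, ?_, ?_, ?_⟩
  · intro p hp
    obtain ⟨x, hx, rfl⟩ := memG.1 hp
    exact ⟨otpFun A x, mem_otpSet.2 ⟨x, hx, rfl⟩, x, hx, rfl⟩
  · intro ξ hξ
    obtain ⟨x, hx, rfl⟩ := mem_otpSet.1 hξ
    exact ⟨x, hx, memG.2 ⟨x, hx, rfl⟩⟩
  · intro ξ y y' h h'
    obtain ⟨x, hx, heq⟩ := memG.1 h
    obtain ⟨x', hx', heq'⟩ := memG.1 h'
    obtain ⟨he1, he2⟩ := ZFSet.pair_injective heq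
    obtain ⟨he1', he2'⟩ := ZFSet.pair_injective heq'
    rw [← he2, ← he2']
    exact otpFun_inj hord hx hx' (he1.trans he1'.symm)
  · intro ξ ξ' y h h'
    obtain ⟨x, hx, heq⟩ := memG.1 h
    obtain ⟨x', hx', heq'⟩ := memG.1 h'
    obtain ⟨he1, he2⟩ := ZFSet.pair_injective heq
    obtain ⟨he1', he2'⟩ := ZFSet.pair_injective heq'
    have hxx : x = x' := he2.trans he2'.symm
    rw [← he1, ← he1', hxx]
  · intro y hy
    exact ⟨otpFun A y, memG.2 ⟨y, hy, rfl⟩⟩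
  · intro ξ y ξ' y' h h' hξξ'
    obtain ⟨x, hx, heq⟩ := memG.1 h
    obtain ⟨x', hx', heq'⟩ := memG.1 h'
    obtain ⟨he1, he2⟩ := ZFSet.pair_injective heq
    obtain ⟨he1', he2'⟩ := ZFSet.pair_injective heq'
    rw [← he2, ← he2']
    rw [← he1, ← he1'] at hξξ'
    exact (otpFun_mem_iff hord hx hx').1 hξξ'

theorem otpSet_mem_hset {θ A : ZFSet} (hord : ∀ a ∈ A, IsOrd a) (hA : A ∈ HSet θ) :
    otpSet A ∈ HSet θ := by
  apply hset_of_transitive_small (isOrd_otpSet hord).1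
  have : (otpSet A).toSet ⊆ (otpFun A) '' A.toSet := by
    intro z hz
    obtain ⟨x, hx, rfl⟩ := mem_otpSet.1 ((ZFSet.mem_toSet _ _).1 hz)
    exact ⟨x, (ZFSet.mem_toSet _ _).2 hx, rfl⟩
  refine lt_of_le_of_lt (Cardinal.mk_le_mk_of_subset this) ?_
  refine lt_of_le_of_lt Cardinal.mk_image_le ?_
  exact lt_of_le_of_lt (Cardinal.mk_le_mk_of_subset subset_tcl) hA

section GetIso

variable {θ : ZFSet} {M : Set ZFSet} (hθc : ℵ₀ ≤ card θ) (hM : Prec M (HSet θ))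
include hθc hM

theorem exists_iso_in_M {A : ZFSet} (hA : A ∈ M) (hord : ∀ a ∈ A, IsOrd a) :
    ∃ α g, α ∈ M ∧ g ∈ M ∧ IsoProps α g A := by
  set G := img (fun x => ZFSet.pair (otpFun A x) x) A with hGdef
  have hGsub : G ⊆ ZFSet.prod (otpSet A) A := by
    intro p hp
    obtain ⟨x, hx, rfl⟩ := (mem_img).1 hp
    exact ZFSet.pair_mem_prod.2 ⟨mem_otpSet.2 ⟨x, hx, rfl⟩, hx⟩
  have hAH : A ∈ HSet θ := hM.1 hA
  have hotpH : otpSet A ∈ HSet θ := otpSet_mem_hset hord hAH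
  have hGH : G ∈ HSet θ := hset_of_subset hGsub (prod_hset hθc hotpH hAH)
  have hex : Realize (HSet θ) (.ex (.ex isoF)) (Fin.cons A vz) := by
    rw [realize_ex]
    refine ⟨otpSet A, hotpH, ?_⟩
    rw [realize_ex]
    refine ⟨G, hGH, ?_⟩
    exact (realize_isoF hθc hGH hotpH hAH).2 (isoProps_otp hord)
  obtain ⟨α, hαM, hα⟩ := defin hM (.ex isoF) (Fin.cons A vz) (consM hA consM0) hex
  obtain ⟨g, hgM, hg⟩ := defin hM isoF (Fin.cons α (Fin.cons A vz))
    (consM hαM (consM hA consM0)) hα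
  exact ⟨α, g, hαM, hgM, (realize_isoF hθc (hM.1 hgM) (hM.1 hαM) (hM.1 hA)).1 hg⟩

theorem val_mem_M' {g x y : ZFSet} (hg : g ∈ M) (hx : x ∈ M) (hxy : ZFSet.pair x y ∈ g)
    (hfun : ∀ x y y', ZFSet.pair x y ∈ g → ZFSet.pair x y' ∈ g → y = y') : y ∈ M := by
  have hgH := hM.1 hg
  have hyH : y ∈ HSet θ := (kpair_mem_hset (hset_trans hgH hxy)).2
  have hxH : x ∈ HSet θ := hM.1 hx
  have hex : Realize (HSet θ) (.ex (pmemF i1 i2 0)) (Fin.cons g (Fin.cons x vz)) := by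
    rw [realize_ex]
    refine ⟨y, hyH, ?_⟩
    rw [realize_pmemF]
    show PMem (HSet θ) g x y
    exact (abs_pmem hθc hgH hxH hyH).2 hxy
  obtain ⟨y', hy'M, hy'⟩ := defin hM (pmemF i1 i2 0) (Fin.cons g (Fin.cons x vz))
    (consM hg (consM hx consM0)) hex
  rw [realize_pmemF] at hy'
  have : ZFSet.pair x y' ∈ g := (abs_pmem hθc hgH hxH (hM.1 hy'M)).1 hy'
  rwa [hfun x y' y this hxy] at hy'M

theorem arg_mem_M {g x y : ZFSet} (hg : g ∈ M) (hy : y ∈ M) (hxy : ZFSet.pair x y ∈ g)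
    (hinj : ∀ x x' y, ZFSet.pair x y ∈ g → ZFSet.pair x' y ∈ g → x = x') : x ∈ M := by
  have hgH := hM.1 hg
  have hxH : x ∈ HSet θ := (kpair_mem_hset (hset_trans hgH hxy)).1
  have hyH : y ∈ HSet θ := hM.1 hy
  have hex : Realize (HSet θ) (.ex (pmemF i1 0 i2)) (Fin.cons g (Fin.cons y vz)) := by
    rw [realize_ex]
    refine ⟨x, hxH, ?_⟩
    rw [realize_pmemF]
    show PMem (HSet θ) g x y
    exact (abs_pmem hθc hgH hxH hyH).2 hxy
  obtain ⟨x', hx'M, hx'⟩ := defin hM (pmemF i1 0 i2) (Fin.cons g (Fin.cons y vz))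
    (consM hg (consM hy consM0)) hex
  rw [realize_pmemF] at hx'
  have : ZFSet.pair x' y ∈ g := (abs_pmem hθc hgH (hM.1 hx'M) hyH).1 hx'
  rwa [hinj x' x y this hxy] at hx'M

end GetIso

theorem ole_kappa_of_iso {κ A α g : ZFSet} (hκOrd : IsOrd κ) (hAκ : ∀ a ∈ A, a ∈ κ)
    (hiso : IsoProps α g A) : ole α κ := by
  obtain ⟨hαOrd, hpairs, htotal, hfun, hinj, hsurj, hop⟩ := hiso
  have key : ∀ ξ : ZFSet, ξ ∈ α → ∀ y, ZFSet.pair ξ y ∈ g → ξ ⊆ y := by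
    intro ξ
    induction ξ using ZFSet.mem_wf.induction with
    | _ ξ IH =>
    intro hξα y hξy η hη
    have hηα : η ∈ α := hαOrd.1 ξ hξα hη
    obtain ⟨y', hy'A, hηy'⟩ := htotal η hηα
    have hsub : η ⊆ y' := IH η hη hηα y' hηy'
    have hy'Ord : IsOrd y' := hκOrd.mem (hAκ y' hy'A)
    have hηOrd : IsOrd η := hαOrd.mem hηα
    have h1 : ole η y' := IsOrd.ole_of_subset hηOrd hy'Ord hsub
    have h2 : y' ∈ y := hop η y' ξ y hηy' hξy hη
    have hyOrd : IsOrd y := by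
      obtain ⟨x0, hx0, y0, hy0, heq⟩ := hpairs _ hξy
      obtain ⟨-, he2⟩ := ZFSet.pair_injective heq
      exact he2 ▸ hκOrd.mem (hAκ y0 hy0)
    exact mem_of_ole_mem hyOrd h1 h2
  have hsub : α ⊆ κ := by
    intro ξ hξ
    obtain ⟨y, hyA, hξy⟩ := htotal ξ hξ
    have h1 : ole ξ y := IsOrd.ole_of_subset (hαOrd.mem hξ) (hκOrd.mem (hAκ y hyA))
      (key ξ hξ y hξy)
    exact mem_of_ole_mem hκOrd h1 (hAκ y hyA)
  exact IsOrd.ole_of_subset hαOrd hκOrd hsub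

/-! ### Definable separation instances -/

section SepM

variable {θ : ZFSet} {M : Set ZFSet} (hθc : ℵ₀ ≤ card θ) (hM : Prec M (HSet θ))
include hθc hM

/-- `f₀ = {⟨x,y⟩ ∈ e : y is ∈-minimal with ⟨x,y⟩ ∈ e}` is in `M` when `e` is. -/
theorem f0_mem_M {e : ZFSet} (he : e ∈ M) :
    ZFSet.sep (fun p => ∃ x y, p = ZFSet.pair x y ∧ ∀ y', ZFSet.pair x y' ∈ e → y' ∉ y) e
      ∈ M := by
  set f0 := ZFSet.sep
    (fun p => ∃ x y, p = ZFSet.pair x y ∧ ∀ y', ZFSet.pair x y' ∈ e → y' ∉ y) e with hf0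
  have heH := hM.1 he
  have hchar : ∀ p ∈ HSet θ, (p ∈ f0 ↔ p ∈ e ∧ ∃ x ∈ HSet θ, ∃ y ∈ HSet θ,
      PPair (HSet θ) p x y ∧ ∀ y' ∈ HSet θ, PMem (HSet θ) e x y' → y' ∉ y) := by
    intro p hpH
    rw [hf0, ZFSet.mem_sep]
    constructor
    · rintro ⟨hpe, x, y, rfl, hmin⟩
      have hc := kpair_mem_hset hpH
      refine ⟨hpe, x, hc.1, y, hc.2, (abs_ppair hθc hpH hc.1 hc.2).2 rfl, ?_⟩
      intro y' hy'H hpm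
      exact hmin y' ((abs_pmem hθc heH hc.1 hy'H).1 hpm)
    · rintro ⟨hpe, x, hxH, y, hyH, hpair, hmin⟩
      refine ⟨hpe, x, y, (abs_ppair hθc hpH hxH hyH).1 hpair, ?_⟩
      intro y' hy'
      have hy'H : y' ∈ HSet θ := (kpair_mem_hset (hset_trans heH hy')).2
      exact hmin y' hy'H ((abs_pmem hθc heH hxH hy'H).2 hy')
  have hf0H : f0 ∈ HSet θ := hset_of_subset (fun z hz => (ZFSet.mem_sep.1 hz).1) heH
  have hex : Realize (HSet θ)
      (.ex (SF.all ((SF.mem 0 i1).iff ((SF.mem 0 i2).and (.ex (.ex ((pairF i2 i1 0).and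
        (SF.all ((pmemF i5 i2 0).imp (.not (.mem 0 i1)))))))))))
      (Fin.cons e vz) := by
    rw [realize_ex]
    refine ⟨f0, hf0H, ?_⟩
    simp only [realize_all, realize_iff, realize_and, realize_ex, realize_imp, realize_not,
      realize_mem, realize_pairF, realize_pmemF, Fin.cons_succ, Fin.cons_zero]
    intro p hpH
    rw [hchar p hpH]
  obtain ⟨w, hwM, hw⟩ := defin hM _ (Fin.cons e vz) (consM he consM0) hex
  simp only [realize_all, realize_iff, realize_and, realize_ex, realize_imp, realize_not,
    realize_mem, realize_pairF, realize_pmemF, Fin.cons_succ, Fin.cons_zero] at hw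
  have : w = f0 := by
    apply ZFSet.ext
    intro z
    constructor
    · intro hz
      have hzH := hset_trans (hM.1 hwM) hz
      have h1 := (hw z hzH).1 hz
      rw [hchar z hzH]
      obtain ⟨hze, x, hxH, y, hyH, hpair, hmin⟩ := h1
      exact ⟨hze, x, hxH, y, hyH, hpair, hmin⟩
    · intro hz
      have hzH := hset_trans hf0H hz
      have h1 := (hchar z hzH).1 hz
      obtain ⟨hze, x, hxH, y, hyH, hpair, hmin⟩ := h1
      exact (hw z hzH).2 ⟨hze, x, hxH, y, hyH, hpair, hmin⟩
  rwa [this] at hwM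

/-- The set of "injectivity points" of `f` below `κ` is in `M`. -/
theorem A0_mem_M {f κ : ZFSet} (hf : f ∈ M) (hκM : κ ∈ M) :
    ZFSet.sep (fun x => (∃ y, ZFSet.pair x y ∈ f) ∧
      ∀ x' ∈ x, ∀ y, ZFSet.pair x y ∈ f → ZFSet.pair x' y ∉ f) κ ∈ M := by
  set A0 := ZFSet.sep (fun x => (∃ y, ZFSet.pair x y ∈ f) ∧
    ∀ x' ∈ x, ∀ y, ZFSet.pair x y ∈ f → ZFSet.pair x' y ∉ f) κ with hA0
  have hfH := hM.1 hf
  have hκH := hM.1 hκM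
  have hchar : ∀ x ∈ HSet θ, (x ∈ A0 ↔ x ∈ κ ∧ (∃ y ∈ HSet θ, PMem (HSet θ) f x y) ∧
      ∀ x' ∈ HSet θ, x' ∈ x → ∀ y ∈ HSet θ, PMem (HSet θ) f x y →
        ¬ PMem (HSet θ) f x' y) := by
    intro x hxH
    rw [hA0, ZFSet.mem_sep]
    constructor
    · rintro ⟨hxκ, ⟨y, hy⟩, hinj⟩
      have hyH := (kpair_mem_hset (hset_trans hfH hy)).2
      refine ⟨hxκ, ⟨y, hyH, (abs_pmem hθc hfH hxH hyH).2 hy⟩, ?_⟩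
      intro x' hx'H hx'x y' hy'H hpm hpm'
      exact hinj x' hx'x y' ((abs_pmem hθc hfH hxH hy'H).1 hpm)
        ((abs_pmem hθc hfH hx'H hy'H).1 hpm')
    · rintro ⟨hxκ, ⟨y, hyH, hpm⟩, hinj⟩
      refine ⟨hxκ, ⟨y, (abs_pmem hθc hfH hxH hyH).1 hpm⟩, ?_⟩
      intro x' hx'x y' h1 h2
      have hx'H := hset_trans hxH hx'x
      have hy'H := (kpair_mem_hset (hset_trans hfH h1)).2
      exact hinj x' hx'H hx'x y' hy'H ((abs_pmem hθc hfH hxH hy'H).2 h1)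
        ((abs_pmem hθc hfH hx'H hy'H).2 h2)
  have hA0H : A0 ∈ HSet θ := hset_of_subset (fun z hz => (ZFSet.mem_sep.1 hz).1) hκH
  have hex : Realize (HSet θ)
      (.ex (SF.all ((SF.mem 0 i1).iff ((SF.mem 0 i3).and ((SF.ex (pmemF i3 i1 0)).and
        (SF.all ((SF.mem 0 i1).imp (SF.all ((pmemF i4 i2 0).imp (.not (pmemF i4 i1 0)))))))))))
      (Fin.cons f (Fin.cons κ vz)) := by
    rw [realize_ex]
    refine ⟨A0, hA0H, ?_⟩
    simp only [realize_all, realize_iff, realize_and, realize_ex, realize_imp, realize_not,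
      realize_mem, realize_pmemF, Fin.cons_succ, Fin.cons_zero]
    intro x hxH
    rw [hchar x hxH]
  obtain ⟨w, hwM, hw⟩ := defin hM _ (Fin.cons f (Fin.cons κ vz))
    (consM hf (consM hκM consM0)) hex
  simp only [realize_all, realize_iff, realize_and, realize_ex, realize_imp, realize_not,
    realize_mem, realize_pmemF, Fin.cons_succ, Fin.cons_zero] at hw
  have : w = A0 := by
    apply ZFSet.ext
    intro z
    constructor
    · intro hz
      have hzH := hset_trans (hM.1 hwM) hz
      exact (hchar z hzH).2 ((hw z hzH).1 hz)
    · intro hz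
      have hzH := hset_trans hA0H hz
      exact (hw z hzH).2 ((hchar z hzH).1 hz)
  rwa [this] at hwM

end SepM

/-! ### Main argument -/

theorem nat2zf_injective : Function.Injective nat2zf := by
  intro m n h
  rcases Nat.lt_trichotomy m n with hlt | heq | hlt
  · exact absurd (h ▸ nat2zf_mem_of_lt hlt) (ZFSet.mem_irrefl _)
  · exact heq
  · exact absurd (h ▸ nat2zf_mem_of_lt hlt) (ZFSet.mem_irrefl _)

theorem aleph0_le_card_of_regCard {θ : ZFSet} (hθ : IsRegCard θ) : ℵ₀ ≤ card θ := by
  have hmem : ∀ n, nat2zf n ∈ θ := fun n => hθ.2.1 (nat2zf_mem_omega n)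
  have : Function.Injective (fun n : ℕ => (⟨nat2zf n, hmem n⟩ : θ.toSet)) := by
    intro m n h
    exact nat2zf_injective (congrArg Subtype.val h)
  have : Infinite θ.toSet := Infinite.of_injective _ this
  exact Cardinal.aleph0_le_mk θ.toSet

section MainArg

variable {θ κ : ZFSet} {M : Set ZFSet}
  (hθ : IsRegCard θ) (hM : Prec M (HSet θ)) (hκ : KappaSpec M κ)

include hκ in
/-- Any ordinal of `M` below `κ_M` is a subset of `M`. -/
theorem subM_of_mem {a : ZFSet} (ha : a ∈ M) (haκ : a ∈ κ) : ∀ x ∈ a, x ∈ M := by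
  by_contra hcon
  push_neg at hcon
  obtain ⟨β, hβ, hβM⟩ := hcon
  rcases hκ.2.2.2 a (hκ.1.mem haκ) ha ⟨β, hβ, hβM⟩ with h | h
  · exact ZFSet.mem_asymm haκ h
  · exact ZFSet.mem_irrefl a (h ▸ haκ)

end MainArg

section Mu

variable {θ κ : ZFSet} {M : Set ZFSet}
  (hθ : IsRegCard θ) (hM : Prec M (HSet θ)) (hκ : KappaSpec M κ)

/-- `μ = M ∩ κ_M` as a ZF set. -/
noncomputable def muSet (M : Set ZFSet) (κ : ZFSet) : ZFSet := ZFSet.sep (fun z => z ∈ M) κ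

include hκ

theorem mem_mu {z : ZFSet} : z ∈ muSet M κ ↔ z ∈ M ∧ z ∈ κ := by
  rw [muSet, ZFSet.mem_sep]; tauto

theorem muOrd : IsOrd (muSet M κ) := by
  constructor
  · intro z hz x hx
    obtain ⟨hzM, hzκ⟩ := (mem_mu hκ).1 hz
    exact (mem_mu hκ).2 ⟨subM_of_mem hκ hzM hzκ x hx, hκ.1.1 z hzκ hx⟩
  · intro z hz
    exact (hκ.1.mem ((mem_mu hκ).1 hz).2).1

theorem mu_mem_kappa : muSet M κ ∈ κ := by
  have hsub : muSet M κ ⊆ κ := fun z hz => ((mem_mu hκ).1 hz).2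
  rcases IsOrd.ole_of_subset (muOrd hκ) hκ.1 hsub with h | h
  · exact h
  · exfalso
    obtain ⟨β, hβκ, hβM⟩ := hκ.2.2.1
    have hβμ : β ∈ muSet M κ := by rw [h]; exact hβκ
    exact hβM ((mem_mu hκ).1 hβμ).1

theorem mu_not_mem_M : muSet M κ ∉ M := by
  intro h
  exact ZFSet.mem_irrefl _ ((mem_mu hκ).2 ⟨h, mu_mem_kappa hκ⟩)

include hθ hM

theorem natM (n : ℕ) : nat2zf n ∈ M := by
  induction n with
  | zero => exact empty_mem_M (aleph0_le_card_of_regCard hθ) hM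
  | succ n ih => exact insert_mem_M (aleph0_le_card_of_regCard hθ) hM ih ih

theorem omega_mem_kappa : ZFSet.omega ∈ κ := by
  obtain ⟨β, hβκ, hβM⟩ := hκ.2.2.1
  rcases IsOrd.tri κ ZFSet.omega hκ.1 isOrd_omega with h | h | h
  · exfalso
    obtain ⟨n, rfl⟩ := mem_omega_iff.1 h
    obtain ⟨m, _, rfl⟩ := mem_nat2zf hβκ
    exact hβM (natM hθ hM hκ m)
  · exfalso
    obtain ⟨n, rfl⟩ := mem_omega_iff.1 (h ▸ hβκ : β ∈ ZFSet.omega)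
    exact hβM (natM hθ hM hκ n)
  · exact h

theorem omega_sub_mu : ZFSet.omega ⊆ muSet M κ := by
  intro z hz
  obtain ⟨n, rfl⟩ := mem_omega_iff.1 hz
  exact (mem_mu hκ).2 ⟨natM hθ hM hκ n, hκ.1.1 _ (omega_mem_kappa hθ hM hκ) hz⟩

end Mu

section CompM

variable {θ : ZFSet} {M : Set ZFSet} (hθc : ℵ₀ ≤ card θ) (hM : Prec M (HSet θ))
include hθc hM

theorem comp_mem_M {g f X : ZFSet} (hg : g ∈ M) (hf : f ∈ M) (hX : X ∈ M) :
    ZFSet.sep (fun p => ∃ x z y, p = ZFSet.pair x y ∧ ZFSet.pair x z ∈ g ∧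
      ZFSet.pair z y ∈ f) X ∈ M := by
  set h0 := ZFSet.sep (fun p => ∃ x z y, p = ZFSet.pair x y ∧ ZFSet.pair x z ∈ g ∧
    ZFSet.pair z y ∈ f) X with hh0
  have hgH := hM.1 hg
  have hfH := hM.1 hf
  have hXH := hM.1 hX
  have hchar : ∀ p ∈ HSet θ, (p ∈ h0 ↔ p ∈ X ∧ ∃ x ∈ HSet θ, ∃ z ∈ HSet θ, ∃ y ∈ HSet θ,
      PPair (HSet θ) p x y ∧ PMem (HSet θ) g x z ∧ PMem (HSet θ) f z y) := by
    intro p hpH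
    rw [hh0, ZFSet.mem_sep]
    constructor
    · rintro ⟨hpX, x, z, y, rfl, hxz, hzy⟩
      have hc := kpair_mem_hset hpH
      have hzH := (kpair_mem_hset (hset_trans hgH hxz)).2
      exact ⟨hpX, x, hc.1, z, hzH, y, hc.2, (abs_ppair hθc hpH hc.1 hc.2).2 rfl,
        (abs_pmem hθc hgH hc.1 hzH).2 hxz, (abs_pmem hθc hfH hzH hc.2).2 hzy⟩
    · rintro ⟨hpX, x, hxH, z, hzH, y, hyH, hpair, hpm1, hpm2⟩
      exact ⟨hpX, x, z, y, (abs_ppair hθc hpH hxH hyH).1 hpair,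
        (abs_pmem hθc hgH hxH hzH).1 hpm1, (abs_pmem hθc hfH hzH hyH).1 hpm2⟩
  have hh0H : h0 ∈ HSet θ := hset_of_subset (fun w hw => (ZFSet.mem_sep.1 hw).1) hXH
  have hex : Realize (HSet θ)
      (.ex (SF.all ((SF.mem 0 i1).iff ((SF.mem 0 i4).and (SF.ex (SF.ex (SF.ex
        ((pairF i3 i2 0).and ((pmemF i5 i2 i1).and (pmemF i6 i1 0))))))))))
      (Fin.cons g (Fin.cons f (Fin.cons X vz))) := by
    rw [realize_ex]
    refine ⟨h0, hh0H, ?_⟩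
    simp only [realize_all, realize_iff, realize_and, realize_ex, realize_mem,
      realize_pairF, realize_pmemF, Fin.cons_succ, Fin.cons_zero]
    intro p hpH
    rw [hchar p hpH]
  obtain ⟨w, hwM, hw⟩ := defin hM _ (Fin.cons g (Fin.cons f (Fin.cons X vz)))
    (consM hg (consM hf (consM hX consM0))) hex
  simp only [realize_all, realize_iff, realize_and, realize_ex, realize_mem,
    realize_pairF, realize_pmemF, Fin.cons_succ, Fin.cons_zero] at hw
  have : w = h0 := by
    apply ZFSet.ext
    intro z
    constructor
    · intro hz
      have hzH := hset_trans (hM.1 hwM) hz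
      exact (hchar z hzH).2 ((hw z hzH).1 hz)
    · intro hz
      have hzH := hset_trans hh0H hz
      exact (hw z hzH).2 ((hchar z hzH).1 hz)
  rwa [this] at hwM

end CompM

section KeyDich

variable {θ κ : ZFSet} {M : Set ZFSet}
  (hθ : IsRegCard θ) (hM : Prec M (HSet θ)) (hκ : KappaSpec M κ)
include hθ hM hκ

theorem key_dichotomy {A : ZFSet} (hA : A ∈ M) (hAκ : A ⊆ κ) :
    (∀ z ∈ A, z ∈ M) ∨ ∃ g, g ∈ M ∧ IsoProps κ g A := by
  have hθc := aleph0_le_card_of_regCard hθ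
  obtain ⟨α, g, hαM, hgM, hiso⟩ := exists_iso_in_M hθc hM hA (fun a ha => hκ.1.mem (hAκ ha))
  rcases ole_kappa_of_iso hκ.1 (fun a ha => hAκ ha) hiso with hακ | heq
  · left
    intro z hzA
    obtain ⟨ξ, hpair⟩ := hiso.2.2.2.2.2.1 z hzA
    have hξα : ξ ∈ α := by
      obtain ⟨x, hxα, y, hyA, heqp⟩ := hiso.2.1 _ hpair
      obtain ⟨h1, h2⟩ := ZFSet.pair_injective heqp
      rwa [h1]
    have hξM : ξ ∈ M := subM_of_mem hκ hαM hακ ξ hξα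
    exact val_mem_M' hθc hM hgM hξM hpair hiso.2.2.2.1
  · right
    exact ⟨g, hgM, heq ▸ hiso⟩

end KeyDich

section Final

variable {θ κ : ZFSet} {M : Set ZFSet}
  (hθ : IsRegCard θ) (hM : Prec M (HSet θ)) (hκ : KappaSpec M κ)
  (hG : GuessingModel M ℵ₀)
include hθ hM hκ hG

theorem mu_is_card : ∀ b ∈ muSet M κ, card b < card (muSet M κ) := by
  have hθc := aleph0_le_card_of_regCard hθ
  intro b hb
  obtain ⟨hbM, hbκ⟩ := (mem_mu hκ).1 hb
  have hbOrd : IsOrd b := hκ.1.mem hbκ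
  have hbsubM : ∀ x ∈ b, x ∈ M := subM_of_mem hκ hbM hbκ
  have hbsub : b.toSet ⊆ (muSet M κ).toSet := by
    intro x hx
    have hxb : x ∈ b := (ZFSet.mem_toSet _ _).1 hx
    exact (ZFSet.mem_toSet _ _).2 ((mem_mu hκ).2 ⟨hbsubM x hxb, hκ.1.1 b hbκ hxb⟩)
  have hle : card b ≤ card (muSet M κ) := Cardinal.mk_le_mk_of_subset hbsub
  rcases lt_or_eq_of_le hle with h | h
  · exact h
  exfalso
  -- an injection of μ into b
  have hge : Cardinal.mk (muSet M κ).toSet ≤ Cardinal.mk b.toSet := le_of_eq h.symm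
  obtain ⟨G⟩ := (Cardinal.le_def _ _).1 hge
  have hXM : ZFSet.prod κ b ∈ M := prod_mem_M hθc hM hκ.2.1 hbM
  set d := ZFSet.sep (fun p => ∃ x : ZFSet, ∃ hx : x ∈ (muSet M κ).toSet,
    p = ZFSet.pair x (G ⟨x, hx⟩)) (ZFSet.prod κ b) with hd
  have hdX : d ⊆ ZFSet.prod κ b := fun z hz => (ZFSet.mem_sep.1 hz).1
  have hmemd : ∀ (x) (hx : x ∈ (muSet M κ).toSet), ZFSet.pair x (G ⟨x, hx⟩) ∈ d := by
    intro x hx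
    refine ZFSet.mem_sep.2 ⟨ZFSet.pair_mem_prod.2 ⟨?_, ?_⟩, x, hx, rfl⟩
    · exact ((mem_mu hκ).1 ((ZFSet.mem_toSet _ _).1 hx)).2
    · exact (ZFSet.mem_toSet _ _).1 (G ⟨x, hx⟩).2
  have hdM : d.toSet ⊆ M := by
    intro p hp
    obtain ⟨hpX, x, hx, rfl⟩ := ZFSet.mem_sep.1 ((ZFSet.mem_toSet _ _).1 hp)
    have hxM : x ∈ M := ((mem_mu hκ).1 ((ZFSet.mem_toSet _ _).1 hx)).1
    have hGM : (G ⟨x, hx⟩ : ZFSet) ∈ M := hbsubM _ ((ZFSet.mem_toSet _ _).1 (G ⟨x, hx⟩).2)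
    exact kpair_mem_M hθc hM hxM hGM
  obtain ⟨e, heM, heX, hiff⟩ := hG (ZFSet.prod κ b) hXM d hdX (approx_of_subset_M hθc hM hdM)
  have hdsube : ∀ z ∈ d, z ∈ e := fun z hz =>
    (hiff z (hdM ((ZFSet.mem_toSet _ _).2 hz))).2 hz
  -- the minimal-value function f0
  set f0 := ZFSet.sep (fun p => ∃ x y, p = ZFSet.pair x y ∧ ∀ y', ZFSet.pair x y' ∈ e →
    y' ∉ y) e with hf0def
  have hf0M : f0 ∈ M := f0_mem_M hθc hM heM
  have hf0e : f0 ⊆ e := fun z hz => (ZFSet.mem_sep.1 hz).1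
  have hf0mem : ∀ (x) (hx : x ∈ (muSet M κ).toSet), ZFSet.pair x (G ⟨x, hx⟩) ∈ f0 := by
    intro x hx
    refine ZFSet.mem_sep.2 ⟨hdsube _ (hmemd x hx), x, G ⟨x, hx⟩, rfl, ?_⟩
    intro y' hy' hy'G
    have hy'b : y' ∈ b := (ZFSet.pair_mem_prod.1 (heX hy')).2
    have hy'M : y' ∈ M := hbsubM y' hy'b
    have hxM : x ∈ M := ((mem_mu hκ).1 ((ZFSet.mem_toSet _ _).1 hx)).1
    have hpd : ZFSet.pair x y' ∈ d := (hiff _ (kpair_mem_M hθc hM hxM hy'M)).1 hy'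
    obtain ⟨-, x2, hx2, heq2⟩ := ZFSet.mem_sep.1 hpd
    obtain ⟨h1, h2⟩ := ZFSet.pair_injective heq2
    subst h1
    have : G ⟨x, hx2⟩ = G ⟨x, hx⟩ := rfl
    rw [this] at h2
    rw [← h2] at hy'G
    exact ZFSet.mem_irrefl _ hy'G
  have hf0prod : ∀ {x y : ZFSet}, ZFSet.pair x y ∈ f0 → x ∈ κ ∧ y ∈ b := fun h =>
    ZFSet.pair_mem_prod.1 (heX (hf0e h))
  have hf0fun : ∀ x y y', ZFSet.pair x y ∈ f0 → ZFSet.pair x y' ∈ f0 → y = y' := by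
    intro x y y' h1 h2
    obtain ⟨h1e, x1, y1, heq1, hmin1⟩ := ZFSet.mem_sep.1 h1
    obtain ⟨h2e, x2, y2, heq2, hmin2⟩ := ZFSet.mem_sep.1 h2
    obtain ⟨hx1, hy1⟩ := ZFSet.pair_injective heq1
    obtain ⟨hx2, hy2⟩ := ZFSet.pair_injective heq2
    subst hx1; subst hy1; subst hx2; subst hy2
    have hyb : y ∈ b := (hf0prod h1).2
    have hy'b : y' ∈ b := (hf0prod h2).2
    rcases IsOrd.tri y y' (hbOrd.mem hyb) (hbOrd.mem hy'b) with ht | ht | ht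
    · exact absurd ht (hmin2 y h1e)
    · exact ht
    · exact absurd ht (hmin1 y' h2e)
  -- the injectivity locus A0
  set A0 := ZFSet.sep (fun x => (∃ y, ZFSet.pair x y ∈ f0) ∧
    ∀ x' ∈ x, ∀ y, ZFSet.pair x y ∈ f0 → ZFSet.pair x' y ∉ f0) κ with hA0def
  have hA0M : A0 ∈ M := A0_mem_M hθc hM hf0M hκ.2.1
  have hA0κ : A0 ⊆ κ := fun z hz => (ZFSet.mem_sep.1 hz).1
  have hμA0 : ∀ x ∈ muSet M κ, x ∈ A0 := by
    intro x hxμ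
    have hx : x ∈ (muSet M κ).toSet := (ZFSet.mem_toSet _ _).2 hxμ
    refine ZFSet.mem_sep.2 ⟨((mem_mu hκ).1 hxμ).2, ⟨G ⟨x, hx⟩, hf0mem x hx⟩, ?_⟩
    intro x' hx'x y hxy hx'y
    have hx'μ : x' ∈ muSet M κ := (muOrd hκ).1 x hxμ hx'x
    have hx' : x' ∈ (muSet M κ).toSet := (ZFSet.mem_toSet _ _).2 hx'μ
    have h1 : y = G ⟨x, hx⟩ := hf0fun x y _ hxy (hf0mem x hx)
    have h2 : y = G ⟨x', hx'⟩ := hf0fun x' y _ hx'y (hf0mem x' hx')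
    have : (⟨x, hx⟩ : (muSet M κ).toSet) = ⟨x', hx'⟩ := G.injective (Subtype.coe_injective (h1.symm.trans h2))
    have hxx' : x = x' := congrArg Subtype.val this
    rw [hxx'] at hx'x
    exact ZFSet.mem_irrefl _ hx'x
  have hf0injA0 : ∀ x x' y, x ∈ A0 → x' ∈ A0 → ZFSet.pair x y ∈ f0 →
      ZFSet.pair x' y ∈ f0 → x = x' := by
    intro x x' y hxA hx'A hxy hx'y
    rcases IsOrd.tri x x' (hκ.1.mem (hA0κ hxA)) (hκ.1.mem (hA0κ hx'A)) with ht | ht | ht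
    · exact absurd hxy ((ZFSet.mem_sep.1 hx'A).2.2 x ht y hx'y)
    · exact ht
    · exact absurd hx'y ((ZFSet.mem_sep.1 hxA).2.2 x' ht y hxy)
  rcases key_dichotomy hθ hM hκ hA0M hA0κ with hsubM | ⟨g, hgM, hiso⟩
  · -- A0 ⊆ M gives A0 = μ ∈ M, contradiction
    have : A0 = muSet M κ := by
      apply ZFSet.ext
      intro z
      constructor
      · intro hz
        exact (mem_mu hκ).2 ⟨hsubM z hz, hA0κ hz⟩
      · intro hz
        exact hμA0 z hz
    rw [this] at hA0M
    exact mu_not_mem_M hκ hA0M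
  · -- an injection of κ into b in M
    obtain ⟨hgOrd, hgpairs, hgtotal, hgfun, hginj, hgsurj, hgop⟩ := hiso
    set h0 := ZFSet.sep (fun p => ∃ x z y, p = ZFSet.pair x y ∧ ZFSet.pair x z ∈ g ∧
      ZFSet.pair z y ∈ f0) (ZFSet.prod κ b) with hh0def
    have hh0M : h0 ∈ M := comp_mem_M hθc hM hgM hf0M hXM
    have hh0total : ∀ ξ ∈ κ, ∃ y, ZFSet.pair ξ y ∈ h0 := by
      intro ξ hξ
      obtain ⟨z, hzA0, hξz⟩ := hgtotal ξ hξ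
      obtain ⟨y, hzy⟩ := (ZFSet.mem_sep.1 hzA0).2.1
      have hyb : y ∈ b := (hf0prod hzy).2
      exact ⟨y, ZFSet.mem_sep.2 ⟨ZFSet.pair_mem_prod.2 ⟨hξ, hyb⟩, ξ, z, y, rfl, hξz, hzy⟩⟩
    have hh0inj : ∀ x x' y, ZFSet.pair x y ∈ h0 → ZFSet.pair x' y ∈ h0 → x = x' := by
      intro x x' y h1 h2
      obtain ⟨-, x1, z1, y1, heq1, hxz1, hzy1⟩ := ZFSet.mem_sep.1 h1
      obtain ⟨-, x2, z2, y2, heq2, hxz2, hzy2⟩ := ZFSet.mem_sep.1 h2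
      obtain ⟨ha1, hb1⟩ := ZFSet.pair_injective heq1
      obtain ⟨ha2, hb2⟩ := ZFSet.pair_injective heq2
      subst ha1; subst hb1; subst ha2; subst hb2
      have hz1A : z1 ∈ A0 := by
        obtain ⟨u, hu, v, hv, hequv⟩ := hgpairs _ hxz1
        obtain ⟨h1', h2'⟩ := ZFSet.pair_injective hequv
        rwa [h2']
      have hz2A : z2 ∈ A0 := by
        obtain ⟨u, hu, v, hv, hequv⟩ := hgpairs _ hxz2
        obtain ⟨h1', h2'⟩ := ZFSet.pair_injective hequv
        rwa [h2']
      have : z1 = z2 := hf0injA0 z1 z2 y hz1A hz2A hzy1 hzy2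
      subst this
      exact hginj x x' z1 hxz1 hxz2
    have hκM : ∀ ξ ∈ κ, ξ ∈ M := by
      intro ξ hξ
      obtain ⟨y, hy⟩ := hh0total ξ hξ
      have hyb : y ∈ b := (ZFSet.pair_mem_prod.1 ((ZFSet.mem_sep.1 hy).1)).2
      exact arg_mem_M hθc hM hh0M (hbsubM y hyb) hy hh0inj
    obtain ⟨β, hβκ, hβM⟩ := hκ.2.2.1
    exact hβM (hκM β hβκ)

end Final

section Final2

variable {θ κ : ZFSet} {M : Set ZFSet}
  (hθ : IsRegCard θ) (hM : Prec M (HSet θ)) (hκ : KappaSpec M κ)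
  (hG : GuessingModel M ℵ₀)
include hθ hM hκ hG

theorem mu_regular : ∀ s : Set ZFSet, CofinalSetIn s (muSet M κ) →
    Cardinal.mk s = card (muSet M κ) := by
  have hθc := aleph0_le_card_of_regCard hθ
  intro s hs
  obtain ⟨hs1, hs2⟩ := hs
  have hsμtoSet : s ⊆ (muSet M κ).toSet := fun z hz => (ZFSet.mem_toSet _ _).2 (hs1 z hz)
  have hsM : ∀ z ∈ s, z ∈ M := fun z hz => ((mem_mu hκ).1 (hs1 z hz)).1
  have hsκ : ∀ z ∈ s, z ∈ κ := fun z hz => ((mem_mu hκ).1 (hs1 z hz)).2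
  set d := ZFSet.sep (fun z => z ∈ s) κ with hddef
  have hdκ : d ⊆ κ := fun z hz => (ZFSet.mem_sep.1 hz).1
  have hdM : d.toSet ⊆ M := fun z hz =>
    hsM z (ZFSet.mem_sep.1 ((ZFSet.mem_toSet _ _).1 hz)).2
  obtain ⟨e, heM, heX, hiff⟩ := hG κ hκ.2.1 d hdκ (approx_of_subset_M hθc hM hdM)
  -- e is unbounded in κ
  have hreal : ∀ b, b ∈ κ → ∃ γ, γ ∈ e ∧ ole b γ := by
    have hMreal : Realize M
        (.all ((SF.mem 0 i1).imp (.ex ((SF.mem 0 i3).and ((SF.mem i1 0).or (.eq i1 0))))))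
        (Fin.cons κ (Fin.cons e vz)) := by
      simp only [realize_all, realize_imp, realize_ex, realize_and, realize_or,
        realize_mem, realize_eq, Fin.cons_succ, Fin.cons_zero]
      intro b hbM hbκ
      obtain ⟨γ, hγs, hole⟩ := hs2 b ((mem_mu hκ).2 ⟨hbM, hbκ⟩)
      have hγM : γ ∈ M := hsM γ hγs
      have hγe : γ ∈ e := (hiff γ hγM).2 (ZFSet.mem_sep.2 ⟨hsκ γ hγs, hγs⟩)
      exact ⟨γ, hγM, hγe, hole⟩
    have hHreal := (hM.2 _ _ (consM hκ.2.1 (consM heM consM0))).1 hMreal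
    simp only [realize_all, realize_imp, realize_ex, realize_and, realize_or,
      realize_mem, realize_eq, Fin.cons_succ, Fin.cons_zero] at hHreal
    intro b hbκ
    obtain ⟨γ, _, hγe, hole⟩ := hHreal b (hset_trans (hM.1 hκ.2.1) hbκ) hbκ
    exact ⟨γ, hγe, hole⟩
  rcases key_dichotomy hθ hM hκ heM heX with hsubM | ⟨g, hgM, hiso⟩
  · -- e ⊆ M would make e bounded by μ, contradiction
    exfalso
    obtain ⟨γ, hγe, hole⟩ := hreal (muSet M κ) (mu_mem_kappa hκ)
    have hγμ : γ ∈ muSet M κ := (mem_mu hκ).2 ⟨hsubM γ hγe, heX hγe⟩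
    rcases hole with h | h
    · exact ZFSet.mem_asymm h hγμ
    · exact ZFSet.mem_irrefl _ (h ▸ hγμ)
  · -- κ ≅ e, so |μ| ≤ |e ∩ M| = |s|
    have hval : ∀ x : (muSet M κ).toSet, ∃ y, y ∈ s ∧ ZFSet.pair (x : ZFSet) y ∈ g := by
      rintro ⟨x, hx⟩
      have hxμ : x ∈ muSet M κ := (ZFSet.mem_toSet _ _).1 hx
      obtain ⟨hxM, hxκ⟩ := (mem_mu hκ).1 hxμ
      obtain ⟨y, hye, hxy⟩ := hiso.2.2.1 x hxκ
      have hyM : y ∈ M := val_mem_M' hθc hM hgM hxM hxy hiso.2.2.2.1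
      have hyd : y ∈ d := (hiff y hyM).1 hye
      exact ⟨y, (ZFSet.mem_sep.1 hyd).2, hxy⟩
    choose J hJs hJg using hval
    have hJinj : Function.Injective (fun x : (muSet M κ).toSet => (⟨J x, hJs x⟩ : s)) := by
      intro x x' hJeq
      have h1 : J x = J x' := congrArg Subtype.val hJeq
      have h2 : ZFSet.pair (x : ZFSet) (J x) ∈ g := hJg x
      have h3 : ZFSet.pair (x' : ZFSet) (J x) ∈ g := h1 ▸ hJg x'
      exact Subtype.ext (hiso.2.2.2.2.1 _ _ _ h2 h3)
    have hle1 : Cardinal.mk (muSet M κ).toSet ≤ Cardinal.mk s :=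
      Cardinal.mk_le_of_injective hJinj
    have hle2 : Cardinal.mk s ≤ Cardinal.mk (muSet M κ).toSet :=
      Cardinal.mk_le_mk_of_subset hsμtoSet
    exact le_antisymm hle2 hle1

theorem mu_toSet : (muSet M κ).toSet = M ∩ κ.toSet := by
  ext z
  constructor
  · intro hz
    obtain ⟨h1, h2⟩ := (mem_mu hκ).1 ((ZFSet.mem_toSet _ _).1 hz)
    exact ⟨h1, (ZFSet.mem_toSet _ _).2 h2⟩
  · rintro ⟨h1, h2⟩
    exact (ZFSet.mem_toSet _ _).2 ((mem_mu hκ).2 ⟨h1, (ZFSet.mem_toSet _ _).1 h2⟩)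

end Final2

/-- Part of Proposition 2.2(5): if `M ≺ H_θ` is an `ℵ₀`-guessing model then
`M ∩ κ_M` is a regular cardinal. -/
theorem inter_kappaM_regular (θ : ZFSet) (hθ : IsRegCard θ)
    (M : Set ZFSet) (hM : Prec M (HSet θ)) (κ : ZFSet) (hκ : KappaSpec M κ)
    (hG : GuessingModel M ℵ₀) :
    ∃ μ : ZFSet, IsRegCard μ ∧ μ.toSet = M ∩ κ.toSet :=
  ⟨muSet M κ, ⟨⟨muOrd hκ, mu_is_card hθ hM hκ hG⟩, omega_sub_mu hθ hM hκ,
    mu_regular hθ hM hκ hG⟩, mu_toSet hθ hM hκ hG⟩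

end GuessingModels
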